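/- Let Φ ∈ ℝ^{d×d} be a symmetric matrix with Φ − δ·I positive semidefinite for some δ > 0, and let G : ℝ^d → ℝ^d be α-strongly monotone and L-Lipschitz continuous with respect to the Euclidean norm (α ≥ 0, L ≥ 0). Then for all z, z' ∈ ℝ^d, ‖(z − Φ⁻¹G(z)) − (z' − Φ⁻¹G(z'))‖_Φ² ≤ (1 + L²/δ² − 2α/‖Φ‖) · ‖z − z'‖_Φ², where ‖Φ‖ denotes the operator norm of Φ. -/

import Mathlib

open RealInnerProductSpace

/-- The squared `Φ`-induced norm `‖v‖_Φ² = ⟪v, Φ v⟫`. -/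
noncomputable def phiNormSq {d : ℕ} (Φ : Matrix (Fin d) (Fin d) ℝ)
    (v : EuclideanSpace ℝ (Fin d)) : ℝ :=
  ⟪v, Matrix.toEuclideanCLM (𝕜 := ℝ) Φ v⟫

lemma inner_toEuclideanCLM_aux {d : ℕ} (M : Matrix (Fin d) (Fin d) ℝ)
    (x y : EuclideanSpace ℝ (Fin d)) :
    ⟪x, Matrix.toEuclideanCLM (𝕜 := ℝ) M y⟫ =
      dotProduct (star ((WithLp.equiv 2 _) x))
        (Matrix.mulVec M ((WithLp.equiv 2 _) y)) := by
  rw [EuclideanSpace.inner_eq_star_dotProduct, dotProduct_comm]; rfl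

/-- Squared-norm expansion inequality for the forward step `z ↦ z − Φ⁻¹ G(z)`
established in the proof of Lemma 3. -/
theorem forward_step_squared_norm_bound {d : ℕ}
    (Φ : Matrix (Fin d) (Fin d) ℝ) (hΦsymm : Φ.IsSymm)
    (δ : ℝ) (hδ : 0 < δ) (hΦδ : (Φ - δ • (1 : Matrix (Fin d) (Fin d) ℝ)).PosSemidef)
    (G : EuclideanSpace ℝ (Fin d) → EuclideanSpace ℝ (Fin d))
    (α L : ℝ) (hα : 0 ≤ α) (hL : 0 ≤ L)
    (hGmono : ∀ x y, α * ‖x - y‖ ^ 2 ≤ ⟪G x - G y, x - y⟫)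
    (hGlip : ∀ x y, ‖G x - G y‖ ≤ L * ‖x - y‖) :
    ∀ z z' : EuclideanSpace ℝ (Fin d),
      phiNormSq Φ ((z - Matrix.toEuclideanCLM (𝕜 := ℝ) Φ⁻¹ (G z)) -
          (z' - Matrix.toEuclideanCLM (𝕜 := ℝ) Φ⁻¹ (G z'))) ≤
        (1 + L ^ 2 / δ ^ 2 - 2 * α / ‖Matrix.toEuclideanCLM (𝕜 := ℝ) Φ‖) *
          phiNormSq Φ (z - z') := by
  intro z z'
  set A := Matrix.toEuclideanCLM (𝕜 := ℝ) Φ with hA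
  set Ai := Matrix.toEuclideanCLM (𝕜 := ℝ) Φ⁻¹ with hAi
  -- positive definiteness of Φ
  have hδ1 : (δ • (1 : Matrix (Fin d) (Fin d) ℝ)).PosDef := by
    refine Matrix.PosDef.of_dotProduct_mulVec_pos ?_ ?_
    · simp [Matrix.IsHermitian]
    · intro x hx
      simp only [Matrix.smul_mulVec, Matrix.one_mulVec, dotProduct_smul]
      exact smul_pos hδ (Matrix.dotProduct_star_self_pos_iff.mpr hx)
  have hPD : Φ.PosDef := by
    have := Matrix.PosDef.posSemidef_add hΦδ hδ1
    simpa using this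
  have hdet : IsUnit Φ.det := hPD.det_pos.ne'.isUnit
  -- A ∘ Ai = id
  have hAAi : ∀ v, A (Ai v) = v := by
    intro v
    have h1 : A * Ai = 1 := by
      rw [hA, hAi, ← map_mul, Φ.mul_nonsing_inv hdet, map_one]
    have := congrFun (congrArg (fun (T : _ →L[ℝ] _) => (T : _ → _)) h1) v
    simpa using this
  -- self-adjointness of A
  have hΦsa : IsSelfAdjoint Φ := by
    show star Φ = Φ
    rw [Matrix.star_eq_conjTranspose]
    ext i j
    rw [Matrix.conjTranspose_apply, star_trivial]
    simpa [Matrix.transpose_apply] using congrFun (congrFun hΦsymm i) j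
  have hsa : IsSelfAdjoint A := by
    rw [hA]
    show star _ = _
    rw [← map_star]
    exact congrArg _ hΦsa
  have hsym : ∀ x y : EuclideanSpace ℝ (Fin d), ⟪A x, y⟫ = ⟪x, A y⟫ :=
    (ContinuousLinearMap.isSelfAdjoint_iff_isSymmetric.mp hsa)
  -- quadratic lower bound δ‖v‖² ≤ ⟪v, A v⟫
  have hlow : ∀ v : EuclideanSpace ℝ (Fin d), δ * ‖v‖ ^ 2 ≤ ⟪v, A v⟫ := by
    intro v
    have h0 : 0 ≤ ⟪v, Matrix.toEuclideanCLM (𝕜 := ℝ)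
        (Φ - δ • (1 : Matrix (Fin d) (Fin d) ℝ)) v⟫ := by
      rw [inner_toEuclideanCLM_aux]
      exact hΦδ.dotProduct_mulVec_nonneg _
    rw [map_sub, map_smul, map_one] at h0
    simp only [ContinuousLinearMap.sub_apply, ContinuousLinearMap.smul_apply,
      ContinuousLinearMap.one_apply, inner_sub_right, inner_smul_right] at h0
    rw [real_inner_self_eq_norm_sq] at h0
    linarith
  -- upper bound ⟪v, A v⟫ ≤ ‖A‖ ‖v‖²
  have hup : ∀ v : EuclideanSpace ℝ (Fin d), ⟪v, A v⟫ ≤ ‖A‖ * ‖v‖ ^ 2 := by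
    intro v
    calc ⟪v, A v⟫ ≤ ‖v‖ * ‖A v‖ := real_inner_le_norm v (A v)
      _ ≤ ‖v‖ * (‖A‖ * ‖v‖) :=
          mul_le_mul_of_nonneg_left (A.le_opNorm v) (norm_nonneg v)
      _ = ‖A‖ * ‖v‖ ^ 2 := by ring
  -- inverse bound ⟪g, Ai g⟫ ≤ ‖g‖²/δ
  have hinv : ∀ g : EuclideanSpace ℝ (Fin d), ⟪g, Ai g⟫ ≤ ‖g‖ ^ 2 / δ := by
    intro g
    have hAu : A (Ai g) = g := hAAi g
    have h1 : δ * ‖Ai g‖ ^ 2 ≤ ‖Ai g‖ * ‖g‖ := by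
      calc δ * ‖Ai g‖ ^ 2 ≤ ⟪Ai g, A (Ai g)⟫ := hlow (Ai g)
        _ = ⟪Ai g, g⟫ := by rw [hAu]
        _ ≤ ‖Ai g‖ * ‖g‖ := real_inner_le_norm _ g
    have hun : ‖Ai g‖ ≤ ‖g‖ / δ := by
      rcases eq_or_lt_of_le (norm_nonneg (Ai g)) with h | h
      · rw [← h]; positivity
      · rw [le_div_iff₀ hδ]
        nlinarith
    calc ⟪g, Ai g⟫ ≤ ‖g‖ * ‖Ai g‖ := real_inner_le_norm g _
      _ ≤ ‖g‖ * (‖g‖ / δ) := mul_le_mul_of_nonneg_left hun (norm_nonneg g)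
      _ = ‖g‖ ^ 2 / δ := by ring
  -- expansion identity
  have hexp : ∀ u h : EuclideanSpace ℝ (Fin d),
      ⟪u - Ai h, A (u - Ai h)⟫ = ⟪u, A u⟫ - 2 * ⟪h, u⟫ + ⟪h, Ai h⟫ := by
    intro u h
    rw [map_sub, inner_sub_left, inner_sub_right, inner_sub_right, hAAi h,
      ← hsym (Ai h) u, hAAi h, real_inner_comm u h, real_inner_comm (Ai h) h]
    ring
  have hvec : (z - Ai (G z)) - (z' - Ai (G z')) = (z - z') - Ai (G z - G z') := by
    rw [map_sub]; abel
  have hLHS : phiNormSq Φ ((z - Ai (G z)) - (z' - Ai (G z'))) =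
      ⟪z - z', A (z - z')⟫ - 2 * ⟪G z - G z', z - z'⟫ +
        ⟪G z - G z', Ai (G z - G z')⟫ := by
    show ⟪_, A _⟫ = _
    rw [hvec]
    exact hexp (z - z') (G z - G z')
  have hRHS : phiNormSq Φ (z - z') = ⟪z - z', A (z - z')⟫ := rfl
  rw [hLHS, hRHS]
  -- abbreviations
  have hPnn : 0 ≤ ⟪z - z', A (z - z')⟫ :=
    le_trans (by positivity) (hlow (z - z'))
  have hterm2 : ⟪G z - G z', Ai (G z - G z')⟫ ≤
      L ^ 2 / δ ^ 2 * ⟪z - z', A (z - z')⟫ := by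
    have h1 := hinv (G z - G z')
    have h2 := hGlip z z'
    have h3 := hlow (z - z')
    have ha2 : ‖G z - G z'‖ ^ 2 ≤ L ^ 2 * ‖z - z'‖ ^ 2 := by
      nlinarith [norm_nonneg (G z - G z'), norm_nonneg (z - z')]
    have key : ‖G z - G z'‖ ^ 2 / δ ≤ L ^ 2 / δ ^ 2 * ⟪z - z', A (z - z')⟫ := by
      rw [div_mul_eq_mul_div, div_le_div_iff₀ hδ (by positivity : (0:ℝ) < δ ^ 2)]
      nlinarith [mul_le_mul_of_nonneg_left h3 (mul_nonneg (sq_nonneg L) hδ.le),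
        mul_le_mul_of_nonneg_right ha2 (mul_pos hδ hδ).le]
    linarith
  have hterm3 : 2 * α / ‖A‖ * ⟪z - z', A (z - z')⟫ ≤ 2 * ⟪G z - G z', z - z'⟫ := by
    have hgw0 : α * ‖z - z'‖ ^ 2 ≤ ⟪G z - G z', z - z'⟫ := hGmono z z'
    rcases eq_or_lt_of_le (norm_nonneg A) with h0 | h0
    · have hA0 : A = 0 := by rw [← norm_eq_zero]; exact h0.symm
      have hP0 : ⟪z - z', A (z - z')⟫ = (0:ℝ) := by
        rw [hA0]; simp
      rw [hP0, mul_zero]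
      nlinarith [sq_nonneg ‖z - z'‖]
    · have h1 := hup (z - z')
      rw [div_mul_eq_mul_div, div_le_iff₀ h0]
      nlinarith
  linarith
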